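/- Let E be a real normed vector space, n a natural number, η ∈ Matrix n n ℝ a fixed matrix, x ∈ E. Let e : E → Matrix n n ℝ be differentiable at x with e(x) invertible, and let A : E → (E →L[ℝ] Matrix n n ℝ) satisfy the η-antisymmetry condition (A(x)(v))ᵀ·η + η·(A(x)(v)) = 0 for all v ∈ E. Define g : E → Matrix n n ℝ by g(y) = e(y)ᵀ·η·e(y), and define Γ(x)(v) = e(x)⁻¹·(A(x)(v))·e(x) + e(x)⁻¹·(De(x)(v)). Then the metricity condition holds at x: Dg(x)(v) = (Γ(x)(v))ᵀ·g(x) + g(x)·(Γ(x)(v)) for all v ∈ E, i.e. ∇g = dg − Γᵀg − gΓ = 0. -/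

import Mathlib

attribute [local instance] Matrix.normedAddCommGroup Matrix.normedSpace

open Matrix

noncomputable def mulCLM (n : ℕ) :
    Matrix (Fin n) (Fin n) ℝ →L[ℝ] Matrix (Fin n) (Fin n) ℝ →L[ℝ] Matrix (Fin n) (Fin n) ℝ :=
  LinearMap.toContinuousLinearMap
    { toFun := fun a => LinearMap.toContinuousLinearMap (LinearMap.mul ℝ _ a)
      map_add' := by intro a b; ext m; simp [add_mul]
      map_smul' := by intro c a; ext m; simp [smul_mul_assoc] }

lemma mulCLM_apply (n : ℕ) (a b : Matrix (Fin n) (Fin n) ℝ) : mulCLM n a b = a * b := rfl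

lemma hasFDerivAt_mul' {E : Type*} [NormedAddCommGroup E] [NormedSpace ℝ E]
    {n : ℕ} {f g : E → Matrix (Fin n) (Fin n) ℝ} {f' g' : E →L[ℝ] Matrix (Fin n) (Fin n) ℝ}
    {x : E} (hf : HasFDerivAt f f' x) (hg : HasFDerivAt g g' x) :
    HasFDerivAt (fun y => f y * g y)
      ((mulCLM n).precompR E (f x) g' + (mulCLM n).precompL E f' (g x)) x :=
  (mulCLM n).hasFDerivAt_of_bilinear hf hg

/-- Metricity: for the metric `g = eᵀηe` induced by the tetrad `e` and the dressed linear
connection `Γ = e⁻¹Ae + e⁻¹de` of an `η`-antisymmetric spin connection `A`, one has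
`∇g = dg − Γᵀg − gΓ = 0` at `x`. -/
theorem stmt14 {E : Type*} [NormedAddCommGroup E] [NormedSpace ℝ E]
    (n : ℕ) (η : Matrix (Fin n) (Fin n) ℝ) (x : E)
    (e : E → Matrix (Fin n) (Fin n) ℝ)
    (he : DifferentiableAt ℝ e x) (hex : IsUnit (e x))
    (A : E → (E →L[ℝ] Matrix (Fin n) (Fin n) ℝ))
    (hA : ∀ v : E, (A x v)ᵀ * η + η * (A x v) = 0)
    (g : E → Matrix (Fin n) (Fin n) ℝ)
    (hg : ∀ y : E, g y = (e y)ᵀ * η * e y)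
    (Γ : E → Matrix (Fin n) (Fin n) ℝ)
    (hΓ : ∀ v : E, Γ v = (e x)⁻¹ * (A x v) * e x + (e x)⁻¹ * fderiv ℝ e x v) :
    ∀ v : E, fderiv ℝ g x v = (Γ v)ᵀ * g x + g x * Γ v := by
  intro v
  have hdet : IsUnit (e x).det := (Matrix.isUnit_iff_isUnit_det _).mp hex
  have hinv2 : e x * (e x)⁻¹ = 1 := Matrix.mul_nonsing_inv _ hdet
  have hinvT : ((e x)⁻¹)ᵀ * (e x)ᵀ = 1 := by
    rw [← Matrix.transpose_mul, hinv2, Matrix.transpose_one]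
  -- the transpose-then-multiply-by-η map, as a CLM
  have hT : IsLinearMap ℝ (fun m : Matrix (Fin n) (Fin n) ℝ => mᵀ * η) := by
    constructor
    · intro a b; simp [Matrix.transpose_add, add_mul]
    · intro c a; simp [Matrix.transpose_smul, smul_mul_assoc]
  set T : Matrix (Fin n) (Fin n) ℝ →L[ℝ] Matrix (Fin n) (Fin n) ℝ :=
    LinearMap.toContinuousLinearMap hT.mk' with hTdef
  have hTapp : ∀ m, T m = mᵀ * η := fun m => rfl
  set D := fderiv ℝ e x with hD
  have he' : HasFDerivAt e D x := he.hasFDerivAt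
  have h1 : HasFDerivAt (fun y => (e y)ᵀ * η) (T.comp D) x := T.hasFDerivAt.comp x he'
  have h2 : HasFDerivAt (fun y => ((e y)ᵀ * η) * e y)
      ((mulCLM n).precompR E ((e x)ᵀ * η) D + (mulCLM n).precompL E (T.comp D) (e x)) x :=
    hasFDerivAt_mul' h1 he'
  have hgfun : g = fun y => (e y)ᵀ * η * e y := funext hg
  have hfd : fderiv ℝ g x v = (e x)ᵀ * η * (D v) + (D v)ᵀ * η * e x := by
    rw [hgfun, show fderiv ℝ (fun y => (e y)ᵀ * η * e y) x = _ from h2.fderiv]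
    simp [ContinuousLinearMap.precompR, ContinuousLinearMap.precompL, mulCLM_apply, hTapp]
    rfl
  rw [hfd, hΓ v, hg x]
  set a := e x
  set M := A x v
  have e1 : ∀ X : Matrix (Fin n) (Fin n) ℝ, (a⁻¹)ᵀ * (aᵀ * X) = X := by
    intro X; rw [← Matrix.mul_assoc, hinvT, Matrix.one_mul]
  have e2 : ∀ X : Matrix (Fin n) (Fin n) ℝ, a * (a⁻¹ * X) = X := by
    intro X; rw [← Matrix.mul_assoc, hinv2, Matrix.one_mul]
  have key : aᵀ * (Mᵀ * (η * a)) = -(aᵀ * (η * (M * a))) := by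
    have h0 : (Mᵀ * η) * a + (η * M) * a = 0 := by
      rw [← add_mul, hA v, Matrix.zero_mul]
    have : aᵀ * (Mᵀ * (η * a)) + aᵀ * (η * (M * a)) = 0 := by
      rw [show aᵀ * (Mᵀ * (η * a)) + aᵀ * (η * (M * a))
          = aᵀ * ((Mᵀ * η) * a + (η * M) * a) by noncomm_ring, h0, mul_zero]
    exact eq_neg_of_add_eq_zero_left this
  simp only [Matrix.transpose_add, Matrix.transpose_mul, add_mul, mul_add,
    Matrix.mul_assoc, e1, e2, key]
  abel
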